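/- Let ℛ be a linear operator on matrix space such that ⟨Z, (ℛ∘ℛ)(Z)⟩ ≥ ⟨Z, ℛ(Z)⟩ for all Z, and let 𝒫_T be an orthogonal projection with ‖𝒫_T − 𝒫_T∘ℛ∘𝒫_T‖_{F→F} ≤ 1/2. Then for every Ψ, ‖ℛ(𝒫_T(Ψ))‖_F² ≥ (1/2)‖𝒫_T(Ψ)‖_F². -/

import Mathlib

theorem sampling_operator_lower_bound
    {E : Type*} [NormedAddCommGroup E] [InnerProductSpace ℝ E]
    (P R : E →ₗ[ℝ] E)
    (hPproj : ∀ x, P (P x) = P x)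
    (hPsa : ∀ x y, (inner ℝ (P x) y : ℝ) = inner ℝ x (P y))
    (hRsa : ∀ x y, (inner ℝ (R x) y : ℝ) = inner ℝ x (R y))
    (hRR : ∀ z, (inner ℝ z (R (R z)) : ℝ) ≥ inner ℝ z (R z))
    (hcontr : ∀ z, ‖P z - P (R (P z))‖ ≤ (1 / 2) * ‖z‖) :
    ∀ ψ : E, (1 / 2) * ‖P ψ‖ ^ 2 ≤ ‖R (P ψ)‖ ^ 2 := by
  intro ψ
  set z := P ψ with hz
  have hPz : P z = z := hPproj ψ
  -- ‖R z‖² = ⟨z, R (R z)⟩ ≥ ⟨z, R z⟩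
  have h1 : (inner ℝ z (R z) : ℝ) ≤ ‖R z‖ ^ 2 := by
    have : (inner ℝ (R z) (R z) : ℝ) = inner ℝ z (R (R z)) := hRsa z (R z)
    have h := hRR z
    rw [← this] at h
    calc (inner ℝ z (R z) : ℝ) ≤ inner ℝ (R z) (R z) := h
      _ = ‖R z‖ ^ 2 := real_inner_self_eq_norm_sq (R z)
  -- ⟨z, R z⟩ = ⟨z, P (R z)⟩
  have h2 : (inner ℝ z (R z) : ℝ) = inner ℝ z (P (R z)) := by
    calc (inner ℝ z (R z) : ℝ) = inner ℝ (P z) (R z) := by rw [hPz]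
      _ = inner ℝ z (P (R z)) := hPsa z (R z)
  -- Cauchy–Schwarz bound on ⟨z, z - P(R z)⟩
  have hc : ‖z - P (R z)‖ ≤ (1 / 2) * ‖z‖ := by
    have := hcontr z
    rwa [hPz] at this
  have hcs : (inner ℝ z (z - P (R z)) : ℝ) ≤ (1 / 2) * ‖z‖ ^ 2 := by
    calc (inner ℝ z (z - P (R z)) : ℝ) ≤ ‖z‖ * ‖z - P (R z)‖ := real_inner_le_norm _ _
      _ ≤ ‖z‖ * ((1 / 2) * ‖z‖) := by
          exact mul_le_mul_of_nonneg_left hc (norm_nonneg z)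
      _ = (1 / 2) * ‖z‖ ^ 2 := by ring
  have h3 : (inner ℝ z (P (R z)) : ℝ) = ‖z‖ ^ 2 - inner ℝ z (z - P (R z)) := by
    rw [inner_sub_right, real_inner_self_eq_norm_sq]; ring
  have : (1 / 2) * ‖z‖ ^ 2 ≤ inner ℝ z (R z) := by
    rw [h2, h3]; linarith
  linarith
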